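/- Let N, R_r, X_t be natural numbers, let 𝒟 ⊆ {1,…,N} with R_r − X_t − |𝒟| ≥ 1 and R_r − |𝒟| ≤ N − |𝒟|, and let u : {1,…,N} → ℝ be nonnegative. Suppose that for every subset R ⊆ {1,…,N}∖𝒟 with |R| = R_r − |𝒟| and every subset X ⊆ R with |X| = X_t one has ∑_{n ∈ R∖X} u(n) ≥ 1. Then ∑_{n ∈ {1,…,N}∖𝒟} u(n) ≥ (N − |𝒟|)/(R_r − X_t − |𝒟|). -/
import Mathlib


/-- Averaged upload-cost lower bound `C_u ≥ (N - |𝒟|)/(R_r - X_t - |𝒟|)` (Remark 1). -/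
theorem stmt_2 (N R_r X_t : ℕ)
    (𝒟 : Finset ℕ) (h𝒟 : 𝒟 ⊆ Finset.Icc 1 N)
    (h1 : 1 ≤ (R_r : ℤ) - (X_t : ℤ) - (𝒟.card : ℤ))
    (h2 : (R_r : ℤ) - (𝒟.card : ℤ) ≤ (N : ℤ) - (𝒟.card : ℤ))
    (u : ℕ → ℝ) (hu : ∀ n ∈ Finset.Icc 1 N, 0 ≤ u n)
    (h : ∀ R ⊆ Finset.Icc 1 N \ 𝒟, (R.card : ℤ) = (R_r : ℤ) - (𝒟.card : ℤ) →
      ∀ X ⊆ R, X.card = X_t → 1 ≤ ∑ n ∈ R \ X, u n) :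
    ((N : ℝ) - (𝒟.card : ℝ)) / ((R_r : ℝ) - (X_t : ℝ) - (𝒟.card : ℝ)) ≤
      ∑ n ∈ Finset.Icc 1 N \ 𝒟, u n := by
  set S := Finset.Icc 1 N \ 𝒟 with hS
  set d := 𝒟.card with hd
  -- basic arithmetic facts
  have hdN : d ≤ N := by
    have := Finset.card_le_card h𝒟
    simpa [Nat.card_Icc] using this
  have hRd : X_t + d + 1 ≤ R_r := by omega
  have hRN : R_r ≤ N := by omega
  set q := R_r - X_t - d with hq
  set k := R_r - d with hk
  set m := N - d with hm
  have hq1 : 1 ≤ q := by omega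
  have hqk : q ≤ k := by omega
  have hkm : k ≤ m := by omega
  have hScard : S.card = m := by
    rw [hS, Finset.card_sdiff_of_subset h𝒟, Nat.card_Icc]; omega
  -- every q-subset of S has sum ≥ 1
  have key : ∀ T ⊆ S, T.card = q → (1:ℝ) ≤ ∑ n ∈ T, u n := by
    intro T hTS hTq
    obtain ⟨R, hTR, hRS, hRk⟩ := Finset.exists_subsuperset_card_eq hTS
      (by omega) (by omega : k ≤ S.card)
    have hXcard : (R \ T).card = X_t := by
      rw [Finset.card_sdiff_of_subset hTR]; omega
    have := h R hRS (by rw [hRk]; push_cast; omega) (R \ T) (Finset.sdiff_subset) hXcard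
    rwa [Finset.sdiff_sdiff_eq_self hTR] at this
  -- choose the minimizing q-subset
  have hpow : (S.powersetCard q).Nonempty := by
    rw [Finset.powersetCard_nonempty]; omega
  obtain ⟨T, hTmem, hTmin⟩ := Finset.exists_min_image (S.powersetCard q)
    (fun T => ∑ n ∈ T, u n) hpow
  rw [Finset.mem_powersetCard] at hTmem
  obtain ⟨hTS, hTq⟩ := hTmem
  have hT1 : (1:ℝ) ≤ ∑ n ∈ T, u n := key T hTS hTq
  -- every y outside T has u y ≥ u x for x ∈ T
  have hswap : ∀ y ∈ S \ T, ∀ x ∈ T, u x ≤ u y := by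
    intro y hy x hx
    rw [Finset.mem_sdiff] at hy
    obtain ⟨hyS, hyT⟩ := hy
    set T' := insert y (T.erase x) with hT'
    have hT'S : T' ⊆ S := by
      intro z hz
      rw [hT', Finset.mem_insert] at hz
      rcases hz with rfl | hz
      · exact hyS
      · exact hTS (Finset.mem_of_mem_erase hz)
    have hyne : y ∉ T.erase x := fun hc => hyT (Finset.mem_of_mem_erase hc)
    have hT'q : T'.card = q := by
      rw [hT', Finset.card_insert_of_notMem hyne, Finset.card_erase_of_mem hx]; omega
    have hmin := hTmin T' (Finset.mem_powersetCard.mpr ⟨hT'S, hT'q⟩)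
    have hsum' : ∑ n ∈ T', u n = ∑ n ∈ T, u n - u x + u y := by
      rw [hT', Finset.sum_insert hyne, Finset.sum_erase_eq_sub hx]; ring
    rw [hsum'] at hmin
    linarith
  -- each y outside T has q * u y ≥ 1
  have hy1 : ∀ y ∈ S \ T, (1:ℝ) / q ≤ u y := by
    intro y hy
    have : ∑ n ∈ T, u n ≤ ∑ _n ∈ T, u y := Finset.sum_le_sum (fun x hx => hswap y hy x hx)
    rw [Finset.sum_const, hTq, nsmul_eq_mul] at this
    rw [div_le_iff₀ (by positivity)]
    linarith [hT1]
  -- assemble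
  have hsplit : ∑ n ∈ S, u n = ∑ n ∈ T, u n + ∑ n ∈ S \ T, u n := by
    rw [← Finset.sum_sdiff hTS]; ring
  have hSdT : (S \ T).card = m - q := by
    rw [Finset.card_sdiff_of_subset hTS, hScard, hTq]
  have hrest : ((m - q : ℕ) : ℝ) * (1 / q) ≤ ∑ n ∈ S \ T, u n := by
    calc ((m - q : ℕ) : ℝ) * (1 / q) = ∑ _n ∈ S \ T, (1:ℝ)/q := by
          rw [Finset.sum_const, hSdT, nsmul_eq_mul]
      _ ≤ _ := Finset.sum_le_sum hy1
  have hqm : q ≤ m := le_trans hqk hkm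
  have hcast : ((m - q : ℕ) : ℝ) = (m : ℝ) - q := by
    push_cast [Nat.cast_sub hqm]; ring
  have hqpos : (0:ℝ) < q := by positivity
  have hqZ : (q:ℤ) = (R_r:ℤ) - X_t - d := by omega
  have hmZ : (m:ℤ) = (N:ℤ) - d := by omega
  have hqR : (q:ℝ) = (R_r:ℝ) - X_t - d := by exact_mod_cast hqZ
  have hmR : (m:ℝ) = (N:ℝ) - d := by exact_mod_cast hmZ
  rw [← hqR, ← hmR, div_le_iff₀ hqpos]
  have hq1R : (1:ℝ) ≤ q := by exact_mod_cast hq1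
  have h3 : (m:ℝ) - q ≤ (∑ n ∈ S \ T, u n) * q := by
    have h4 := mul_le_mul_of_nonneg_right hrest hqpos.le
    rwa [hcast, mul_assoc, one_div_mul_cancel hqpos.ne', mul_one] at h4
  have h5 : (1:ℝ) * q ≤ (∑ n ∈ T, u n) * q := mul_le_mul_of_nonneg_right hT1 hqpos.le
  have h6 : (∑ n ∈ S, u n) * q = (∑ n ∈ T, u n) * q + (∑ n ∈ S \ T, u n) * q := by
    rw [hsplit]; ring
  linarith
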